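/- Let E be a real Banach space, τ > 0, t ∈ ℝ, and let g : ℝ → E be twice continuously differentiable on [t − τ, t + τ]. Then ‖g(t)‖ ≤ (1/(2τ)) ∫_{t−τ}^{t+τ} ‖g(s)‖ ds + (τ/2) ∫_{t−τ}^{t+τ} ‖g''(s)‖ ds. -/

import Mathlib

open intervalIntegral MeasureTheory Set

/-- Averaged Taylor estimate: if `g : ℝ → E` is twice continuously differentiable on
`[t − τ, t + τ]`, then
`‖g(t)‖ ≤ (1/(2τ)) ∫_{t−τ}^{t+τ} ‖g(s)‖ ds + (τ/2) ∫_{t−τ}^{t+τ} ‖g''(s)‖ ds`. -/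
theorem averaged_taylor_estimate
    {E : Type*} [NormedAddCommGroup E] [NormedSpace ℝ E] [CompleteSpace E]
    (τ t : ℝ) (hτ : 0 < τ) (g : ℝ → E)
    (hg : ContDiffOn ℝ 2 g (Set.Icc (t - τ) (t + τ))) :
    ‖g t‖ ≤ (1 / (2 * τ)) * ∫ s in (t - τ)..(t + τ), ‖g s‖
      + (τ / 2) * ∫ s in (t - τ)..(t + τ),
          ‖iteratedDerivWithin 2 g (Set.Icc (t - τ) (t + τ)) s‖ := by
  have hab : t - τ ≤ t + τ := by linarith
  set I := Set.Icc (t - τ) (t + τ) with hIdef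
  have hI : UniqueDiffOn ℝ I := uniqueDiffOn_Icc (by linarith)
  have htI : t ∈ I := ⟨by linarith, by linarith⟩
  set g₁ := derivWithin g I with hg₁def
  set g₂ := iteratedDerivWithin 2 g I with hg₂def
  have hgc : ContinuousOn g I := hg.continuousOn
  have hg₁cd : ContDiffOn ℝ 1 g₁ I := hg.derivWithin hI (by norm_num)
  have hg₁c : ContinuousOn g₁ I := hg₁cd.continuousOn
  have hg₂c : ContinuousOn g₂ I :=
    hg.continuousOn_iteratedDerivWithin (by norm_num) hI
  have hg₂eq : ∀ x ∈ I, g₂ x = derivWithin g₁ I x := by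
    intro x hx
    rw [hg₂def, show (2 : ℕ) = 1 + 1 from rfl, iteratedDerivWithin_succ]
    exact derivWithin_congr (fun y hy => congrFun iteratedDerivWithin_one y)
      (congrFun iteratedDerivWithin_one x)
  have hIoo : Set.Ioo (t - τ) (t + τ) ⊆ I := Set.Ioo_subset_Icc_self
  have hgd : ∀ x ∈ Set.Ioo (t - τ) (t + τ), HasDerivAt g (g₁ x) x := by
    intro x hx
    have h1 : DifferentiableOn ℝ g I := hg.differentiableOn (by norm_num)
    exact ((h1 x (hIoo hx)).hasDerivWithinAt).hasDerivAt (Icc_mem_nhds hx.1 hx.2)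
  have hg₁d : ∀ x ∈ Set.Ioo (t - τ) (t + τ), HasDerivAt g₁ (g₂ x) x := by
    intro x hx
    have h1 : DifferentiableOn ℝ g₁ I := hg₁cd.differentiableOn one_ne_zero
    have h2 := ((h1 x (hIoo hx)).hasDerivWithinAt).hasDerivAt (Icc_mem_nhds hx.1 hx.2)
    rwa [← hg₂eq x (hIoo hx)] at h2
  have hsubIcc : ∀ s ∈ I, Set.uIcc t s ⊆ I := fun s hs =>
    Set.uIcc_subset_Icc htI hs
  have ftcA : ∀ s ∈ I, (∫ u in t..s, g₁ u) = g s - g t := by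
    intro s hs
    apply intervalIntegral.integral_eq_sub_of_hasDeriv_right
      (hgc.mono (hsubIcc s hs))
    · intro x hx
      have hx' : x ∈ Set.Ioo (t - τ) (t + τ) :=
        ⟨(le_min htI.1 hs.1).trans_lt hx.1, hx.2.trans_le (max_le htI.2 hs.2)⟩
      exact (hgd x hx').hasDerivWithinAt
    · exact (hg₁c.mono (hsubIcc s hs)).intervalIntegrable
  have ftcB : ∀ u ∈ I, (∫ v in t..u, g₂ v) = g₁ u - g₁ t := by
    intro u hu
    apply intervalIntegral.integral_eq_sub_of_hasDeriv_right
      (hg₁c.mono (hsubIcc u hu))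
    · intro x hx
      have hx' : x ∈ Set.Ioo (t - τ) (t + τ) :=
        ⟨(le_min htI.1 hu.1).trans_lt hx.1, hx.2.trans_le (max_le htI.2 hu.2)⟩
      exact (hg₁d x hx').hasDerivWithinAt
    · exact (hg₂c.mono (hsubIcc u hu)).intervalIntegrable
  set C := ∫ v in (t - τ)..(t + τ), ‖g₂ v‖ with hCdef
  have hg₂nc : ContinuousOn (fun v => ‖g₂ v‖) I := hg₂c.norm
  have hg₂int : IntervalIntegrable (fun v => ‖g₂ v‖) volume (t - τ) (t + τ) :=
    (hg₂nc.mono (by rw [Set.uIcc_of_le hab])).intervalIntegrable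
  have hC0 : 0 ≤ C :=
    intervalIntegral.integral_nonneg hab fun _ _ => norm_nonneg _
  have hbound : ∀ u ∈ I, ‖g₁ u - g₁ t‖ ≤ C := by
    intro u hu
    rw [← ftcB u hu]
    refine (intervalIntegral.norm_integral_le_abs_integral_norm).trans ?_
    rcases le_total t u with h | h
    · rw [abs_of_nonneg (intervalIntegral.integral_nonneg h fun _ _ => norm_nonneg _)]
      exact intervalIntegral.integral_mono_interval htI.1 h hu.2
        (Filter.Eventually.of_forall fun _ => norm_nonneg _) hg₂int
    · rw [intervalIntegral.integral_symm, abs_neg,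
        abs_of_nonneg (intervalIntegral.integral_nonneg h fun _ _ => norm_nonneg _)]
      exact intervalIntegral.integral_mono_interval hu.1 h htI.2
        (Filter.Eventually.of_forall fun _ => norm_nonneg _) hg₂int
  set R := fun s => ∫ u in t..s, (g₁ u - g₁ t) with hRdef
  have hsubc : ContinuousOn (fun u => g₁ u - g₁ t) I := hg₁c.sub continuousOn_const
  have hsubint : IntervalIntegrable (fun u => g₁ u - g₁ t) volume (t - τ) (t + τ) :=
    (hsubc.mono (by rw [Set.uIcc_of_le hab])).intervalIntegrable
  have hRcont : ContinuousOn R (Set.uIcc (t - τ) (t + τ)) :=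
    continuousOn_primitive_interval' hsubint (by rw [Set.uIcc_of_le hab]; exact htI)
  have hRc : ContinuousOn R I := by rwa [Set.uIcc_of_le hab] at hRcont
  have hRbound : ∀ s ∈ I, ‖R s‖ ≤ C * |s - t| := by
    intro s hs
    apply intervalIntegral.norm_integral_le_of_norm_le_const
    intro u hu
    have huI : u ∈ I := hsubIcc s hs (Set.uIoc_subset_uIcc hu)
    exact hbound u huI
  have hid : ∀ s ∈ I, g t = g s - (s - t) • g₁ t - R s := by
    intro s hs
    have hconst : IntervalIntegrable (fun _ : ℝ => g₁ t) volume t s :=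
      intervalIntegrable_const
    have hsint : IntervalIntegrable (fun u => g₁ u - g₁ t) volume t s :=
      (hsubc.mono (hsubIcc s hs)).intervalIntegrable
    have h1 : g s - g t = (s - t) • g₁ t + R s := by
      rw [← ftcA s hs]
      calc (∫ u in t..s, g₁ u)
          = ∫ u in t..s, ((fun _ => g₁ t) u + (g₁ u - g₁ t)) := by
            congr 1; ext u; abel
        _ = (∫ _ in t..s, g₁ t) + R s :=
            intervalIntegral.integral_add hconst hsint
        _ = (s - t) • g₁ t + R s := by rw [intervalIntegral.integral_const]
    have := h1
    rw [sub_eq_iff_eq_add] at this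
    rw [this]; abel
  have hgint : IntervalIntegrable g volume (t - τ) (t + τ) :=
    (hgc.mono (by rw [Set.uIcc_of_le hab])).intervalIntegrable
  have hRint : IntervalIntegrable R volume (t - τ) (t + τ) :=
    hRcont.intervalIntegrable
  have hmidint : IntervalIntegrable (fun s => (s - t) • g₁ t) volume (t - τ) (t + τ) :=
    (Continuous.intervalIntegrable ((continuous_sub_right t).smul continuous_const) _ _)
  have hzero : (∫ s in (t - τ)..(t + τ), (s - t)) = 0 := by
    rw [intervalIntegral.integral_sub intervalIntegrable_id intervalIntegrable_const,
      integral_id, intervalIntegral.integral_const]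
    simp; ring
  have key : (2 * τ) • g t = (∫ s in (t - τ)..(t + τ), g s)
      - ∫ s in (t - τ)..(t + τ), R s := by
    have e1 : (∫ _ in (t - τ)..(t + τ), g t) = (2 * τ) • g t := by
      rw [intervalIntegral.integral_const]; congr 1; ring
    calc (2 * τ) • g t = ∫ _ in (t - τ)..(t + τ), g t := e1.symm
      _ = ∫ s in (t - τ)..(t + τ), (g s - (s - t) • g₁ t - R s) := by
          apply intervalIntegral.integral_congr
          intro s hs
          exact hid s (by rwa [Set.uIcc_of_le hab] at hs)
      _ = (∫ s in (t - τ)..(t + τ), (g s - (s - t) • g₁ t))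
            - ∫ s in (t - τ)..(t + τ), R s :=
          intervalIntegral.integral_sub (hgint.sub hmidint) hRint
      _ = ((∫ s in (t - τ)..(t + τ), g s)
            - ∫ s in (t - τ)..(t + τ), (s - t) • g₁ t)
            - ∫ s in (t - τ)..(t + τ), R s := by
          rw [intervalIntegral.integral_sub hgint hmidint]
      _ = (∫ s in (t - τ)..(t + τ), g s) - ∫ s in (t - τ)..(t + τ), R s := by
          rw [intervalIntegral.integral_smul_const, hzero, zero_smul, sub_zero]
  have hRnormint : IntervalIntegrable (fun s => ‖R s‖) volume (t - τ) (t + τ) :=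
    hRcont.norm.intervalIntegrable
  have habsint : IntervalIntegrable (fun s => C * |s - t|) volume (t - τ) (t + τ) :=
    (Continuous.intervalIntegrable (continuous_const.mul ((continuous_sub_right t).abs)) _ _)
  have hRtotal : (∫ s in (t - τ)..(t + τ), ‖R s‖)
      ≤ ∫ s in (t - τ)..(t + τ), C * |s - t| := by
    apply intervalIntegral.integral_mono_on hab hRnormint habsint
    intro s hs
    exact hRbound s hs
  have habsval : (∫ s in (t - τ)..(t + τ), C * |s - t|) = C * τ ^ 2 := by
    rw [intervalIntegral.integral_const_mul]
    have hval : (∫ s in (t - τ)..(t + τ), |s - t|) = τ ^ 2 := by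
      rw [← intervalIntegral.integral_add_adjacent_intervals (b := t)
        (Continuous.intervalIntegrable ((continuous_sub_right t).abs) _ _)
        (Continuous.intervalIntegrable ((continuous_sub_right t).abs) _ _)]
      have e1 : (∫ s in (t - τ)..t, |s - t|) = ∫ s in (t - τ)..t, (t - s) := by
        apply intervalIntegral.integral_congr
        intro s hs
        rw [Set.uIcc_of_le (by linarith : t - τ ≤ t)] at hs
        show |s - t| = t - s
        rw [abs_of_nonpos (by linarith [hs.2])]; ring
      have e2 : (∫ s in t..(t + τ), |s - t|) = ∫ s in t..(t + τ), (s - t) := by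
        apply intervalIntegral.integral_congr
        intro s hs
        rw [Set.uIcc_of_le (by linarith : t ≤ t + τ)] at hs
        show |s - t| = s - t
        rw [abs_of_nonneg (by linarith [hs.1])]
      rw [e1, e2,
        intervalIntegral.integral_sub intervalIntegrable_const intervalIntegrable_id,
        intervalIntegral.integral_sub intervalIntegrable_id intervalIntegrable_const,
        integral_id, integral_id, intervalIntegral.integral_const,
        intervalIntegral.integral_const]
      simp; ring
    rw [hval]
  have hnorm : 2 * τ * ‖g t‖ ≤ (∫ s in (t - τ)..(t + τ), ‖g s‖) + C * τ ^ 2 := by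
    have h1 : ‖(2 * τ) • g t‖ = 2 * τ * ‖g t‖ := by
      rw [norm_smul, Real.norm_eq_abs, abs_of_pos (by positivity)]
    calc 2 * τ * ‖g t‖ = ‖(2 * τ) • g t‖ := h1.symm
      _ = ‖(∫ s in (t - τ)..(t + τ), g s) - ∫ s in (t - τ)..(t + τ), R s‖ := by
          rw [key]
      _ ≤ ‖∫ s in (t - τ)..(t + τ), g s‖ + ‖∫ s in (t - τ)..(t + τ), R s‖ :=
          norm_sub_le _ _
      _ ≤ (∫ s in (t - τ)..(t + τ), ‖g s‖) + ∫ s in (t - τ)..(t + τ), ‖R s‖ :=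
          add_le_add (intervalIntegral.norm_integral_le_integral_norm hab)
            (intervalIntegral.norm_integral_le_integral_norm hab)
      _ ≤ (∫ s in (t - τ)..(t + τ), ‖g s‖) + C * τ ^ 2 :=
          add_le_add_right (hRtotal.trans_eq habsval) _
  have h2τ : (0 : ℝ) < 2 * τ := by positivity
  have hnormgint : IntervalIntegrable (fun s => ‖g s‖) volume (t - τ) (t + τ) :=
    (hgc.norm.mono (by rw [Set.uIcc_of_le hab])).intervalIntegrable
  rw [intervalIntegral.integral_add hnormgint intervalIntegrable_const,
    intervalIntegral.integral_const, smul_eq_mul]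
  have h2 : ‖g t‖ ≤ ((∫ s in (t - τ)..(t + τ), ‖g s‖) + C * τ ^ 2) / (2 * τ) := by
    rw [le_div_iff₀ h2τ]; linarith [hnorm]
  have heq2 : 1 / (2 * τ) * ((∫ s in (t - τ)..(t + τ), ‖g s‖) + (t + τ - (t - τ)) * (τ / 2 * C))
      = ((∫ s in (t - τ)..(t + τ), ‖g s‖) + C * τ ^ 2) / (2 * τ) := by
    field_simp; ring
  rw [heq2]; exact h2
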